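/- Let t and p be real numbers with 0 < t < 1 and 0 < p ≤ 1. Define R_{t,p} = (1 − t + tp − 2√((1 − t)(tp + 1 − t)))/(tp − 3 + 3t) if t ≠ 3/(p + 3), and R_{t,p} = 1/2 if t = 3/(p + 3). Then for every r with R_{t,p} < r < 1 there exists a ∈ [0,1) such that t ((r + a)/(1 + a r))^p + (1 − t)(a + (1 − a²) r/(1 − a r)) > 1. (This exhibits, via the Möbius map f(z) = (a − z)/(1 − a z) evaluated at z = −r, the sharpness of the radius R_{t,p} in the inequality t |f(z)|^p + (1 − t) ∑_{k=0}^∞ |a_k| r^k ≤ 1.) -/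

import Mathlib

set_option maxHeartbeats 1000000

/-- Auxiliary: the final analytic step. If the polynomial expression
`(1-t)(2ar+r-1)(r+a) - tp(1-r)(1-ar)` is positive, then the convex combination exceeds 1. -/
lemma bohr_aux_final (t p r a : ℝ) (ht0 : 0 < t) (ht1 : t < 1) (hp0 : 0 < p)
    (hr0 : 0 < r) (hr1 : r < 1) (ha0 : 0 ≤ a) (ha1 : a < 1)
    (hPa : 0 < (1 - t) * (2 * a * r + r - 1) * (r + a) - t * p * (1 - r) * (1 - a * r)) :
    t * ((r + a) / (1 + a * r)) ^ p +
      (1 - t) * (a + (1 - a ^ 2) * r / (1 - a * r)) > 1 := by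
  have hd1 : 0 < 1 + a * r := by nlinarith
  have hd2 : 0 < 1 - a * r := by nlinarith
  have hra : 0 < r + a := by linarith
  set A := (r + a) / (1 + a * r) with hA_def
  have hA0 : 0 < A := div_pos hra hd1
  -- A^p ≥ 1 + p * (1 - 1/A)
  have hlog : 1 - A⁻¹ ≤ Real.log A := Real.one_sub_inv_le_log_of_pos hA0
  have h2 : p * (1 - A⁻¹) ≤ p * Real.log A :=
    mul_le_mul_of_nonneg_left hlog hp0.le
  have h3 : Real.log A * p + 1 ≤ Real.exp (Real.log A * p) := Real.add_one_le_exp _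
  have hAp : 1 + p * (1 - A⁻¹) ≤ A ^ p := by
    rw [Real.rpow_def_of_pos hA0]
    nlinarith
  have hstep : t * (1 + p * (1 - A⁻¹)) ≤ t * A ^ p :=
    mul_le_mul_of_nonneg_left hAp ht0.le
  have hinv : A⁻¹ = (1 + a * r) / (r + a) := by
    rw [hA_def, inv_div]
  have key : t * (1 + p * (1 - A⁻¹)) + (1 - t) * (a + (1 - a ^ 2) * r / (1 - a * r)) - 1
      = (1 - a) * ((1 - t) * (2 * a * r + r - 1) * (r + a) - t * p * (1 - r) * (1 - a * r))
        / ((r + a) * (1 - a * r)) := by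
    rw [hinv]
    field_simp
    ring
  have hpos : 0 < (1 - a) * ((1 - t) * (2 * a * r + r - 1) * (r + a)
      - t * p * (1 - r) * (1 - a * r)) / ((r + a) * (1 - a * r)) := by
    apply div_pos (mul_pos (by linarith) hPa) (mul_pos hra hd2)
  linarith [key, hstep, hpos]

/-- Sharpness of the radius R_{t,p} in the convex-combination Bohr-type inequality:
for R_{t,p} < r < 1 there is a ∈ [0,1) with
t((r+a)/(1+ar))^p + (1-t)(a + (1-a²)r/(1-ar)) > 1. -/
theorem bohr_convex_combination_sharp
    (t p : ℝ) (ht0 : 0 < t) (ht1 : t < 1) (hp0 : 0 < p) (hp1 : p ≤ 1)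
    (R : ℝ)
    (hR : R = if t = 3 / (p + 3) then 1 / 2
              else (1 - t + t * p - 2 * Real.sqrt ((1 - t) * (t * p + 1 - t))) /
                   (t * p - 3 + 3 * t))
    (r : ℝ) (hrR : R < r) (hr1 : r < 1) :
    ∃ a : ℝ, 0 ≤ a ∧ a < 1 ∧
      t * ((r + a) / (1 + a * r)) ^ p +
        (1 - t) * (a + (1 - a ^ 2) * r / (1 - a * r)) > 1 := by
  have htp : 0 < t * p := mul_pos ht0 hp0
  have hS : 0 < t * p + 1 - t := by linarith
  -- Step 1: show 0 < r and G(r) < 0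
  have hmain : 0 < r ∧
      (t * p - 3 + 3 * t) * r ^ 2 - 2 * (t * p + 1 - t) * r + (t * p + 1 - t) < 0 := by
    by_cases heq : t = 3 / (p + 3)
    · -- c = 0 case
      rw [if_pos heq] at hR
      have hp3 : p + 3 ≠ 0 := by linarith
      have heq' : t * (p + 3) = 3 := by rw [heq]; field_simp
      have hc0 : t * p - 3 + 3 * t = 0 := by linear_combination heq'
      have hrhalf : (1:ℝ) / 2 < r := hR ▸ hrR
      constructor
      · linarith
      · have hcr : (t * p - 3 + 3 * t) * r ^ 2 = 0 := by rw [hc0]; ring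
        have hY : 0 < (t * p + 1 - t) * (2 * r - 1) :=
          mul_pos hS (by linarith)
        nlinarith
    · -- c ≠ 0 case
      rw [if_neg heq] at hR
      have hp3 : p + 3 ≠ 0 := by linarith
      have hc : t * p - 3 + 3 * t ≠ 0 := by
        intro h
        apply heq
        field_simp
        linarith
      set s := Real.sqrt ((1 - t) * (t * p + 1 - t)) with hs_def
      have hD : 0 < (1 - t) * (t * p + 1 - t) := mul_pos (by linarith) hS
      have hs_sq : s ^ 2 = (1 - t) * (t * p + 1 - t) := Real.sq_sqrt hD.le
      have hs0 : 0 < s := Real.sqrt_pos.mpr hD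
      have hcR : (t * p - 3 + 3 * t) * R = 1 - t + t * p - 2 * s := by
        rw [hR, mul_div_assoc']; exact mul_div_cancel_left₀ _ hc
      have hid : (t * p - 3 + 3 * t) *
          ((t * p - 3 + 3 * t) * r ^ 2 - 2 * (t * p + 1 - t) * r + (t * p + 1 - t))
          = ((t * p - 3 + 3 * t) * r - (t * p + 1 - t) - 2 * s) *
            ((t * p - 3 + 3 * t) * r - (t * p + 1 - t) + 2 * s) := by
        linear_combination 4 * hs_sq
      rcases hc.lt_or_gt with hcneg | hcpos
      · -- c < 0 : R is the larger root, R > 0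
        have h4s : 4 * s ^ 2 - (t * p + 1 - t) ^ 2
            = (t * p + 1 - t) * (-(t * p - 3 + 3 * t)) := by
          rw [hs_sq]; ring
        have hS2s : t * p + 1 - t < 2 * s := by
          nlinarith [mul_pos hS (show 0 < -(t * p - 3 + 3 * t) by linarith)]
        have hR0 : 0 < R := by
          rw [hR]
          apply div_pos_of_neg_of_neg <;> linarith
        have hr0 : 0 < r := hR0.trans hrR
        have h1 : (t * p - 3 + 3 * t) * r - (t * p + 1 - t) + 2 * s < 0 := by
          have := mul_lt_mul_of_neg_left hrR hcneg
          linarith [hcR, this]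
        have h2 : (t * p - 3 + 3 * t) * r - (t * p + 1 - t) - 2 * s < 0 := by
          linarith
        have hprod : 0 < ((t * p - 3 + 3 * t) * r - (t * p + 1 - t) - 2 * s) *
            ((t * p - 3 + 3 * t) * r - (t * p + 1 - t) + 2 * s) :=
          mul_pos_of_neg_of_neg h2 h1
        refine ⟨hr0, ?_⟩
        nlinarith [hid, hprod]
      · -- c > 0 : R is the smaller root, R > 0
        have h4s : (t * p + 1 - t) ^ 2 - 4 * s ^ 2
            = (t * p + 1 - t) * (t * p - 3 + 3 * t) := by
          rw [hs_sq]; ring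
        have h2sS : 2 * s < t * p + 1 - t := by
          nlinarith [mul_pos hS hcpos]
        have hR0 : 0 < R := by
          rw [hR]
          apply div_pos (by linarith) hcpos
        have hr0 : 0 < r := hR0.trans hrR
        have h1 : 0 < (t * p - 3 + 3 * t) * r - (t * p + 1 - t) + 2 * s := by
          have := mul_lt_mul_of_pos_left hrR hcpos
          linarith [hcR, this]
        have h2 : (t * p - 3 + 3 * t) * r - (t * p + 1 - t) - 2 * s < 0 := by
          have hcr : (t * p - 3 + 3 * t) * r < (t * p - 3 + 3 * t) * 1 :=
            mul_lt_mul_of_pos_left hr1 hcpos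
          nlinarith
        have hprod : ((t * p - 3 + 3 * t) * r - (t * p + 1 - t) - 2 * s) *
            ((t * p - 3 + 3 * t) * r - (t * p + 1 - t) + 2 * s) < 0 :=
          mul_neg_of_neg_of_pos h2 h1
        refine ⟨hr0, ?_⟩
        nlinarith [hid, hprod]
  obtain ⟨hr0, hG⟩ := hmain
  -- Step 2: P1 = -G(r) > 0
  set P1 := (1 - t) * (3 * r - 1) * (1 + r) - t * p * (1 - r) ^ 2 with hP1_def
  have hP1 : 0 < P1 := by
    rw [hP1_def]; linarith [hG]
  -- Step 3: choose a := 1 - P1/(10 + P1)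
  have h10 : 0 < 10 + P1 := by linarith
  set ε := P1 / (10 + P1) with hε_def
  have hε0 : 0 < ε := div_pos hP1 h10
  have hε1 : ε < 1 := by
    rw [hε_def, div_lt_one h10]; linarith
  refine ⟨1 - ε, by linarith, by linarith, ?_⟩
  apply bohr_aux_final t p r (1 - ε) ht0 ht1 hp0 hr0 hr1 (by linarith) (by linarith)
  -- P(a) > 0 for a = 1 - ε
  have hid2 : P1 - ((1 - t) * (2 * (1 - ε) * r + r - 1) * (r + (1 - ε))
      - t * p * (1 - r) * (1 - (1 - ε) * r))
      = ε * (2 * r * (1 - t) * (1 + (1 - ε)) + ((1 - t) * (2 * r ^ 2 + r - 1)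
        + t * p * r * (1 - r))) := by
    rw [hP1_def]; ring
  have hQ : 2 * r * (1 - t) * (1 + (1 - ε)) + ((1 - t) * (2 * r ^ 2 + r - 1)
      + t * p * r * (1 - r)) ≤ 7 := by
    nlinarith [mul_pos ht0 hp0, mul_pos hr0 (show 0 < 1 - t by linarith),
      mul_nonneg (mul_nonneg ht0.le hp0.le) hr0.le]
  have hε7 : ε * 7 < P1 := by
    rw [hε_def, div_mul_eq_mul_div, div_lt_iff₀ h10]
    nlinarith
  have hmul := mul_le_mul_of_nonneg_left hQ hε0.le
  linarith [hid2, hmul, hε7]
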